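/- There exists a constant C > 0 such that for every integer K ≥ 2 the points z_i := sin²(πi/(2K)) (with z_0 = 0 and z_K = 1) and gaps d_i := z_i − z_{i−1} satisfy, for every i ∈ {1, …, K−1}: max(d_i, d_{i+1})² / (z_i·(1 − z_i)) ≤ C/K². -/

import Mathlib

open Real

/-- The non-uniform discretization point `z_i = sin²(πi/(2K))`. -/
noncomputable def zpt (K i : ℕ) : ℝ := Real.sin (π * i / (2 * K)) ^ 2

lemma pi_sq_le_sixteen : π ^ 2 ≤ 16 := by
  nlinarith [Real.pi_le_four, Real.pi_pos]

lemma sinsq_sub_sinsq (x y : ℝ) :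
    Real.sin x ^ 2 - Real.sin y ^ 2 = Real.sin (x + y) * Real.sin (x - y) := by
  rw [Real.sin_add, Real.sin_sub]
  nlinarith [Real.sin_sq_add_cos_sq x, Real.sin_sq_add_cos_sq y]

/-- **Gap-to-variance bound for the sin² discretization (Lemma 4(b)).**
There is a universal constant `C > 0` such that for all `K ≥ 2` and `1 ≤ i ≤ K−1`,
`max(d_i, d_{i+1})² / (z_i(1 − z_i)) ≤ C/K²`, where `d_i = z_i − z_{i−1}`. -/
theorem sinsq_discretization_gap_sq_div_var :
    ∃ C > 0, ∀ K : ℕ, 2 ≤ K → ∀ i : ℕ, 1 ≤ i → i ≤ K - 1 →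
      (max (zpt K i - zpt K (i - 1)) (zpt K (i + 1) - zpt K i)) ^ 2
        / (zpt K i * (1 - zpt K i)) ≤ C / (K : ℝ) ^ 2 := by
  refine ⟨100, by norm_num, ?_⟩
  intro K hK i hi1 hiK
  have hKR : (2:ℝ) ≤ K := by exact_mod_cast hK
  have hK0 : (0:ℝ) < K := by linarith
  have hiR : (1:ℝ) ≤ i := by exact_mod_cast hi1
  have hiK' : (i:ℝ) ≤ K - 1 := by
    have h := hiK
    have : (i:ℝ) ≤ ((K - 1 : ℕ) : ℝ) := by exact_mod_cast h
    rw [Nat.cast_sub (by omega : 1 ≤ K)] at this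
    simpa using this
  set r : ℝ := π / (2 * K) with hr
  have hr0 : 0 < r := by positivity
  set a : ℝ := π * i / (2 * K) with ha
  have hra : r ≤ a := by
    rw [hr, ha]
    apply div_le_div_of_nonneg_right _ (by positivity)
    nlinarith [pi_pos]
  have h2a : 2 * a + 2 * r ≤ π := by
    rw [hr, ha]
    have h1 : 2 * (π * i / (2 * K)) = π * i / K := by ring
    have h2 : 2 * (π / (2 * K)) = π / K := by ring
    rw [h1, h2]
    rw [← add_div, div_le_iff₀ hK0]
    nlinarith [pi_pos]
  -- rewrite the three points
  have hza : zpt K i = Real.sin a ^ 2 := rfl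
  have hzprev : zpt K (i - 1) = Real.sin (a - r) ^ 2 := by
    rw [zpt, ha, hr]
    congr 2
    rw [Nat.cast_sub hi1]
    push_cast
    ring
  have hznext : zpt K (i + 1) = Real.sin (a + r) ^ 2 := by
    rw [zpt, ha, hr]
    congr 2
    push_cast
    ring
  -- θ = 2a
  have hθ0 : 0 < Real.sin (2 * a) :=
    Real.sin_pos_of_pos_of_lt_pi (by nlinarith) (by nlinarith)
  -- sin r ≤ sin (2a)
  have hsr : Real.sin r ≤ Real.sin (2 * a) := by
    rcases le_or_gt (2 * a) (π / 2) with h | h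
    · exact Real.sin_le_sin_of_le_of_le_pi_div_two (by linarith) h (by linarith)
    · have : Real.sin (2 * a) = Real.sin (π - 2 * a) := (Real.sin_pi_sub _).symm
      rw [this]
      exact Real.sin_le_sin_of_le_of_le_pi_div_two (by linarith) (by linarith)
        (by linarith)
  have hsr0 : 0 ≤ Real.sin r := Real.sin_nonneg_of_nonneg_of_le_pi hr0.le
    (by nlinarith)
  -- gap formulas
  have hd1 : zpt K i - zpt K (i - 1) = Real.sin (2 * a - r) * Real.sin r := by
    rw [hza, hzprev, sinsq_sub_sinsq]
    ring_nf
  have hd2 : zpt K (i + 1) - zpt K i = Real.sin (2 * a + r) * Real.sin r := by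
    rw [hza, hznext, sinsq_sub_sinsq]
    ring_nf
  -- bounds on sin(2a ± r)
  have hcos1 : Real.cos r ≤ 1 := Real.cos_le_one r
  have hcos2 : Real.cos (2 * a) ≤ 1 := Real.cos_le_one _
  have hb1 : Real.sin (2 * a - r) ≤ 2 * Real.sin (2 * a) := by
    rw [Real.sin_sub]
    nlinarith [Real.neg_one_le_cos (2 * a)]
  have hb2 : Real.sin (2 * a + r) ≤ 2 * Real.sin (2 * a) := by
    rw [Real.sin_add]
    nlinarith
  have hd10 : 0 ≤ Real.sin (2 * a - r) :=
    Real.sin_nonneg_of_nonneg_of_le_pi (by linarith) (by linarith)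
  -- the max bound
  set M := max (zpt K i - zpt K (i - 1)) (zpt K (i + 1) - zpt K i) with hM
  have hM0 : 0 ≤ M := le_trans (hd1 ▸ mul_nonneg hd10 hsr0)
    (le_max_left (zpt K i - zpt K (i - 1)) (zpt K (i + 1) - zpt K i))
  have hMle : M ≤ 2 * Real.sin (2 * a) * Real.sin r := by
    rw [hM]
    refine max_le ?_ ?_
    · rw [hd1]; exact mul_le_mul_of_nonneg_right hb1 hsr0
    · rw [hd2]; exact mul_le_mul_of_nonneg_right hb2 hsr0
  have hMsq : M ^ 2 ≤ (2 * Real.sin (2 * a) * Real.sin r) ^ 2 :=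
    pow_le_pow_left₀ hM0 hMle 2
  -- the variance
  have hvar : zpt K i * (1 - zpt K i) = Real.sin (2 * a) ^ 2 / 4 := by
    rw [hza, Real.sin_two_mul, ← Real.cos_sq']
    ring
  rw [hvar, div_le_div_iff₀ (by positivity) (by positivity)]
  have hsinr : Real.sin r ≤ r := Real.sin_le hr0.le
  have hrK : r * K = π / 2 := by rw [hr]; field_simp
  have hpi : π ^ 2 ≤ 16 := pi_sq_le_sixteen
  -- M^2 * K^2 ≤ 40 * (sin(2a)^2/4)
  have key : Real.sin r ^ 2 * (K:ℝ) ^ 2 ≤ 4 := by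
    have h1 : Real.sin r * K ≤ π / 2 :=
      le_of_le_of_eq (mul_le_mul_of_nonneg_right hsinr hK0.le) hrK
    have h2 : (Real.sin r * K) ^ 2 ≤ (π / 2) ^ 2 :=
      pow_le_pow_left₀ (mul_nonneg hsr0 hK0.le) h1 2
    calc Real.sin r ^ 2 * (K:ℝ) ^ 2 = (Real.sin r * K) ^ 2 := by ring
      _ ≤ (π / 2) ^ 2 := h2
      _ = π ^ 2 / 4 := by ring
      _ ≤ 4 := by linarith
  calc M ^ 2 * (K:ℝ) ^ 2
      ≤ (2 * Real.sin (2 * a) * Real.sin r) ^ 2 * (K:ℝ) ^ 2 :=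
        mul_le_mul_of_nonneg_right hMsq (by positivity)
    _ = 4 * Real.sin (2 * a) ^ 2 * (Real.sin r ^ 2 * (K:ℝ) ^ 2) := by ring
    _ ≤ 4 * Real.sin (2 * a) ^ 2 * 4 :=
        mul_le_mul_of_nonneg_left key (by positivity)
    _ ≤ 100 * (Real.sin (2 * a) ^ 2 / 4) := by linarith [sq_nonneg (Real.sin (2 * a))]
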